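/- Let n ≥ 1 and 0 < r ≤ 1. Suppose F, a, b are smooth on an open convex set U ⊆ B^n_r × ℝ^n × S^{n×n} and u is a smooth function on B^n_r whose 2-jet lies in U and which is a weak solution of the double divergence equation. Then for every p ∈ {1, …, n}, the function f = ∂u/∂x^p satisfies, for every η ∈ C_c^∞(B^n_r), the identity ∫_{B^n_r} [ (β₀^{ij,kl}(x) ∂_i∂_k f(x) + γ_p^{jl}(x)) ∂_j∂_l η(x) + ∂_p(ψ^k)(x) ∂_k η(x) + ∂_p ζ(x) η(x) ] dx = 0 (repeated indices i, j, k, l summed from 1 to n). -/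

import Mathlib

open MeasureTheory Metric

noncomputable section

abbrev Euc (n : ℕ) := EuclideanSpace ℝ (Fin n)
abbrev Jet (n : ℕ) := Euc n × (Fin n → ℝ) × (Fin n → Fin n → ℝ)

def pd {n : ℕ} (u : Euc n → ℝ) (i : Fin n) : Euc n → ℝ :=
  fun x => fderiv ℝ u x (EuclideanSpace.single i 1)

def pd2 {n : ℕ} (u : Euc n → ℝ) (i j : Fin n) : Euc n → ℝ := pd (pd u j) i

def pdList {n : ℕ} (u : Euc n → ℝ) : List (Fin n) → Euc n → ℝ
  | [] => u
  | i :: L => pd (pdList u L) i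

def jet {n : ℕ} (u : Euc n → ℝ) (x : Euc n) : Jet n :=
  ⟨x, fun i => pd u i x, fun i j => pd2 u i j x⟩

def dX {n : ℕ} (G : Jet n → ℝ) (ξ : Jet n) (p : Fin n) : ℝ :=
  fderiv ℝ G ξ (EuclideanSpace.single p 1, 0, 0)

def dY {n : ℕ} (G : Jet n → ℝ) (ξ : Jet n) (k : Fin n) : ℝ :=
  fderiv ℝ G ξ (0, Pi.single k 1, 0)

def dM {n : ℕ} (G : Jet n → ℝ) (ξ : Jet n) (i k : Fin n) : ℝ :=
  fderiv ℝ G ξ (0, 0, Pi.single i (Pi.single k 1))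

def IsTest {n : ℕ} (r : ℝ) (η : Euc n → ℝ) : Prop :=
  ContDiff ℝ (⊤ : ℕ∞) η ∧ HasCompactSupport η ∧ tsupport η ⊆ ball (0 : Euc n) r

def IsWeakSolution {n : ℕ} (r : ℝ)
    (F : Fin n → Fin n → Jet n → ℝ) (a : Fin n → Jet n → ℝ) (b : Jet n → ℝ)
    (u : Euc n → ℝ) : Prop :=
  ∀ η : Euc n → ℝ, IsTest r η →
    ∫ x in ball (0 : Euc n) r,
      ((∑ j, ∑ l, F j l (jet u x) * pd2 η j l x)
        + (∑ k, a k (jet u x) * pd η k x) + b (jet u x) * η x) = 0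

def LambdaUniform {n : ℕ} (Λ : ℝ) (U : Set (Jet n)) (F : Fin n → Fin n → Jet n → ℝ) : Prop :=
  ∀ ξ ∈ U, ∀ σ : Fin n → Fin n → ℝ, (∀ i j, σ i j = σ j i) →
    (∑ i, ∑ j, ∑ k, ∑ l, dM (F j l) ξ i k * σ i j * σ k l) ≥ Λ * ∑ i, ∑ j, (σ i j) ^ 2

def JetInU {n : ℕ} (r : ℝ) (U : Set (Jet n)) (u : Euc n → ℝ) : Prop :=
  ∀ x ∈ ball (0 : Euc n) r, jet u x ∈ U

def SmoothOnU {n : ℕ} (U : Set (Jet n)) (F : Fin n → Fin n → Jet n → ℝ)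
    (a : Fin n → Jet n → ℝ) (b : Jet n → ℝ) : Prop :=
  (∀ j l, ContDiffOn ℝ (⊤ : ℕ∞) (F j l) U) ∧ (∀ k, ContDiffOn ℝ (⊤ : ℕ∞) (a k) U) ∧
    ContDiffOn ℝ (⊤ : ℕ∞) b U

def C2alpha {n : ℕ} (r α : ℝ) (u : Euc n → ℝ) : Prop :=
  ContDiffOn ℝ 2 u (ball (0 : Euc n) r) ∧
  ∃ C : ℝ, ∀ i j : Fin n, ∀ x ∈ ball (0 : Euc n) r, ∀ y ∈ ball (0 : Euc n) r,
    |pd2 u i j x - pd2 u i j y| ≤ C * ‖x - y‖ ^ α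

def CalphaBnd {n : ℕ} (r α M : ℝ) (f : Euc n → ℝ) : Prop :=
  (∀ x ∈ ball (0 : Euc n) r, |f x| ≤ M) ∧
  (∀ x ∈ ball (0 : Euc n) r, ∀ y ∈ ball (0 : Euc n) r, |f x - f y| ≤ M * ‖x - y‖ ^ α)

def W2Bound {n : ℕ} (r M : ℝ) (u : Euc n → ℝ) : Prop :=
  ∀ x ∈ ball (0 : Euc n) r,
    |u x| ≤ M ∧ (∀ i, |pd u i x| ≤ M) ∧ (∀ i j, |pd2 u i j x| ≤ M)

def beta0 {n : ℕ} (F : Fin n → Fin n → Jet n → ℝ) (u : Euc n → ℝ)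
    (i j k l : Fin n) (x : Euc n) : ℝ := dM (F j l) (jet u x) i k

def gammaP {n : ℕ} (F : Fin n → Fin n → Jet n → ℝ) (u : Euc n → ℝ)
    (p j l : Fin n) (x : Euc n) : ℝ :=
  (∑ k, dY (F j l) (jet u x) k * pd2 u p k x) + dX (F j l) (jet u x) p

def psiF {n : ℕ} (a : Fin n → Jet n → ℝ) (u : Euc n → ℝ) (k : Fin n) (x : Euc n) : ℝ :=
  a k (jet u x)

def zetaF {n : ℕ} (b : Jet n → ℝ) (u : Euc n → ℝ) (x : Euc n) : ℝ := b (jet u x)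

end

noncomputable section
open ContDiff in
lemma infty_eq : ((⊤ : ℕ∞) : WithTop ℕ∞) = ∞ := rfl

section helpers
variable {n : ℕ} {s : Set (Euc n)} {g : Euc n → ℝ}

lemma infty_add_one : (⊤ : ℕ∞) + 1 ≤ ((⊤ : ℕ∞) : WithTop ℕ∞) :=
  le_of_eq (show ((⊤ : ℕ∞) : WithTop ℕ∞) = ((⊤ : ℕ∞) : WithTop ℕ∞) + 1 from rfl).symm

lemma one_le_infty : (1 : WithTop ℕ∞) ≤ ((⊤ : ℕ∞) : WithTop ℕ∞) := by
  exact_mod_cast OrderTop.le_top _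

lemma two_le_infty : (2 : WithTop ℕ∞) ≤ ((⊤ : ℕ∞) : WithTop ℕ∞) := by
  rw [show (2 : WithTop ℕ∞) = ((2 : ℕ∞) : WithTop ℕ∞) from rfl]
  exact_mod_cast (le_top : (2 : ℕ∞) ≤ ⊤)

lemma pd_eq_comp (g : Euc n → ℝ) (i : Fin n) :
    pd g i = (ContinuousLinearMap.apply ℝ ℝ (EuclideanSpace.single i 1)) ∘ (fderiv ℝ g) := rfl

lemma pd_contDiffOn (hs : IsOpen s) (hg : ContDiffOn ℝ (⊤ : ℕ∞) g s) (i : Fin n) :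
    ContDiffOn ℝ (⊤ : ℕ∞) (pd g i) s := by
  rw [pd_eq_comp]
  exact ((ContinuousLinearMap.apply ℝ ℝ (EuclideanSpace.single i 1)).contDiff.comp_contDiffOn
    (hg.fderiv_of_isOpen hs infty_add_one))

lemma pd_contDiff (hg : ContDiff ℝ (⊤ : ℕ∞) g) (i : Fin n) :
    ContDiff ℝ (⊤ : ℕ∞) (pd g i) := by
  rw [pd_eq_comp]
  exact (ContinuousLinearMap.apply ℝ ℝ (EuclideanSpace.single i 1)).contDiff.comp
    (hg.fderiv_right infty_add_one)

lemma pd2_eq_fderiv2 (hg : ContDiffAt ℝ (⊤ : ℕ∞) g x) (i j : Fin n) :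
    pd2 g i j x = fderiv ℝ (fderiv ℝ g) x (EuclideanSpace.single i 1) (EuclideanSpace.single j 1) := by
  have hd : DifferentiableAt ℝ (fderiv ℝ g) x :=
    (hg.fderiv_right (m := (⊤ : ℕ∞)) infty_add_one).differentiableAt (by simp)
  have : pd2 g i j x = fderiv ℝ ((ContinuousLinearMap.apply ℝ ℝ (EuclideanSpace.single j 1)) ∘ (fderiv ℝ g)) x (EuclideanSpace.single i 1) := rfl
  rw [this, fderiv_comp x (ContinuousLinearMap.differentiableAt _) hd]
  simp

lemma pd2_symm_at (hg : ContDiffAt ℝ (⊤ : ℕ∞) g x) (i j : Fin n) :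
    pd2 g i j x = pd2 g j i x := by
  have h := hg.isSymmSndFDerivAt (by rw [minSmoothness_of_isRCLikeNormedField]; exact two_le_infty)
  rw [pd2_eq_fderiv2 hg, pd2_eq_fderiv2 hg]
  exact h _ _

lemma pd2_symm (hs : IsOpen s) (hg : ContDiffOn ℝ (⊤ : ℕ∞) g s) (hx : x ∈ s) (i j : Fin n) :
    pd2 g i j x = pd2 g j i x :=
  pd2_symm_at (hg.contDiffAt (hs.mem_nhds hx)) i j

lemma third_swap (hs : IsOpen s) (hu : ContDiffOn ℝ (⊤ : ℕ∞) u s) (hx : x ∈ s) (p i k : Fin n) :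
    pd (pd2 u i k) p x = pd2 (pd u p) i k x := by
  -- pd (pd2 u i k) p x = pd2 (pd u k) p i x  (rfl)
  have h1 : pd (pd2 u i k) p x = pd2 (pd u k) p i x := rfl
  have h2 : pd2 (pd u k) p i x = pd2 (pd u k) i p x := pd2_symm hs (pd_contDiffOn hs hu k) hx p i
  have h3 : pd (pd u k) p =ᶠ[nhds x] pd (pd u p) k := by
    apply Filter.eventuallyEq_of_mem (hs.mem_nhds hx)
    intro y hy
    exact pd2_symm hs hu hy p k
  have h4 : pd2 (pd u k) i p x = pd2 (pd u p) i k x := by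
    show fderiv ℝ (pd (pd u k) p) x _ = fderiv ℝ (pd (pd u p) k) x _
    rw [h3.fderiv_eq]
  rw [h1, h2, h4]

end helpers

section chain
variable {n : ℕ} {s : Set (Euc n)} {u : Euc n → ℝ} {x : Euc n}

lemma jet_contDiffOn (hs : IsOpen s) (hu : ContDiffOn ℝ (⊤ : ℕ∞) u s) :
    ContDiffOn ℝ (⊤ : ℕ∞) (jet u) s := by
  refine ContDiffOn.prodMk contDiffOn_id (ContDiffOn.prodMk ?_ ?_)
  · exact contDiffOn_pi.2 fun i => pd_contDiffOn hs hu i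
  · exact contDiffOn_pi.2 fun i => contDiffOn_pi.2 fun j =>
      pd_contDiffOn hs (pd_contDiffOn hs hu j) i

lemma hasFDerivAt_jet (hs : IsOpen s) (hu : ContDiffOn ℝ (⊤ : ℕ∞) u s) (hx : x ∈ s) :
    HasFDerivAt (jet u)
      ((ContinuousLinearMap.id ℝ (Euc n)).prod
        ((ContinuousLinearMap.pi fun i => fderiv ℝ (pd u i) x).prod
         (ContinuousLinearMap.pi fun i => ContinuousLinearMap.pi fun k => fderiv ℝ (pd2 u i k) x))) x := by
  have hnb := hs.mem_nhds hx
  refine HasFDerivAt.prodMk (hasFDerivAt_id x) (HasFDerivAt.prodMk ?_ ?_)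
  · apply hasFDerivAt_pi''
    intro i
    have : DifferentiableAt ℝ (pd u i) x :=
      ((pd_contDiffOn hs hu i).contDiffAt hnb).differentiableAt (by simp)
    exact this.hasFDerivAt
  · apply hasFDerivAt_pi''
    intro i
    apply hasFDerivAt_pi''
    intro k
    have : DifferentiableAt ℝ (pd2 u i k) x :=
      ((pd_contDiffOn hs (pd_contDiffOn hs hu k) i).contDiffAt hnb).differentiableAt (by simp)
    exact this.hasFDerivAt

lemma pi_decomp (v : Fin n → ℝ) : v = ∑ k, v k • (Pi.single k (1:ℝ) : Fin n → ℝ) := by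
  funext a
  simp [Finset.sum_apply, Pi.single_apply]

lemma mat_decomp (σ : Fin n → Fin n → ℝ) :
    σ = ∑ i, ∑ k, σ i k • (Pi.single i (Pi.single k (1:ℝ) : Fin n → ℝ) : Fin n → Fin n → ℝ) := by
  funext a b
  simp [Finset.sum_apply, Pi.single_apply, apply_ite (fun f : Fin n → ℝ => f b)]

lemma chain_rule {U : Set (Jet n)} {Φ : Jet n → ℝ}
    (hs : IsOpen s) (hu : ContDiffOn ℝ (⊤ : ℕ∞) u s) (hx : x ∈ s)
    (hU : IsOpen U) (hΦ : ContDiffOn ℝ (⊤ : ℕ∞) Φ U) (hmem : jet u x ∈ U) (p : Fin n) :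
    pd (fun y => Φ (jet u y)) p x =
      (∑ i, ∑ k, dM Φ (jet u x) i k * pd (pd2 u i k) p x)
      + ((∑ k, dY Φ (jet u x) k * pd2 u p k x) + dX Φ (jet u x) p) := by
  have hJ := hasFDerivAt_jet hs hu hx
  have hΦd : DifferentiableAt ℝ Φ (jet u x) :=
    (hΦ.contDiffAt (hU.mem_nhds hmem)).differentiableAt (by simp)
  have hcomp : pd (fun y => Φ (jet u y)) p x
      = fderiv ℝ Φ (jet u x) ((EuclideanSpace.single p 1 : Euc n),
          (fun k => pd2 u p k x), (fun i k => pd (pd2 u i k) p x)) := by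
    show fderiv ℝ (Φ ∘ jet u) x _ = _
    rw [fderiv_comp x hΦd hJ.differentiableAt, hJ.fderiv]
    rfl
  rw [hcomp]
  have hsplit : ((EuclideanSpace.single p 1 : Euc n),
      (fun k => pd2 u p k x), (fun i k => pd (pd2 u i k) p x))
      = ((EuclideanSpace.single p 1 : Euc n), 0, 0)
        + ((0 : Euc n), (fun k => pd2 u p k x), 0)
        + ((0 : Euc n), 0, (fun i k => pd (pd2 u i k) p x)) := by
    simp [Prod.ext_iff]
  rw [hsplit, map_add, map_add]
  set L := fderiv ℝ Φ (jet u x) with hL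
  set L1 : (Fin n → ℝ) →L[ℝ] ℝ :=
    L.comp ((ContinuousLinearMap.inr ℝ (Euc n) ((Fin n → ℝ) × (Fin n → Fin n → ℝ))).comp
      (ContinuousLinearMap.inl ℝ (Fin n → ℝ) (Fin n → Fin n → ℝ))) with hL1
  set L2 : (Fin n → Fin n → ℝ) →L[ℝ] ℝ :=
    L.comp ((ContinuousLinearMap.inr ℝ (Euc n) ((Fin n → ℝ) × (Fin n → Fin n → ℝ))).comp
      (ContinuousLinearMap.inr ℝ (Fin n → ℝ) (Fin n → Fin n → ℝ))) with hL2
  have h1 : L ((0 : Euc n), (fun k => pd2 u p k x), 0) = ∑ k, dY Φ (jet u x) k * pd2 u p k x := by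
    have e0 : L ((0 : Euc n), (fun k => pd2 u p k x), 0) = L1 (fun k => pd2 u p k x) := rfl
    rw [e0]
    conv_lhs => rw [pi_decomp (fun k => pd2 u p k x)]
    rw [map_sum]
    congr 1
    funext k
    rw [ContinuousLinearMap.map_smul, smul_eq_mul, mul_comm]
    rfl
  have h2 : L ((0 : Euc n), 0, (fun i k => pd (pd2 u i k) p x))
      = ∑ i, ∑ k, dM Φ (jet u x) i k * pd (pd2 u i k) p x := by
    have e0 : L ((0 : Euc n), 0, (fun i k => pd (pd2 u i k) p x))
        = L2 (fun i k => pd (pd2 u i k) p x) := rfl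
    rw [e0]
    conv_lhs => rw [mat_decomp (fun i k => pd (pd2 u i k) p x)]
    rw [map_sum]
    congr 1
    funext i
    rw [map_sum]
    congr 1
    funext k
    rw [ContinuousLinearMap.map_smul, smul_eq_mul, mul_comm]
    rfl
  have h3 : L ((EuclideanSpace.single p 1 : Euc n), 0, 0) = dX Φ (jet u x) p := rfl
  rw [h1, h2, h3]
  ring

end chain

section ibp
variable {n : ℕ} {r : ℝ}

lemma hcs_pd {φ : Euc n → ℝ} (hφc : HasCompactSupport φ) (p : Fin n) :
    HasCompactSupport (pd φ p) := by
  apply HasCompactSupport.intro hφc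
  intro x hx
  have : fderiv ℝ φ x = 0 := by
    by_contra h
    exact hx (support_fderiv_subset ℝ (by exact h))
  simp [pd, this]

lemma tsupport_pd_subset {φ : Euc n → ℝ} (p : Fin n) : tsupport (pd φ p) ⊆ tsupport φ := by
  apply closure_minimal _ (isClosed_closure)
  intro x hx
  simp only [Function.mem_support, pd] at hx
  have : fderiv ℝ φ x ≠ 0 := fun h => hx (by simp [h])
  exact support_fderiv_subset ℝ this

lemma cutoff_exists (hr0 : 0 < r) {K : Set (Euc n)} (hK : IsClosed K)
    (hKs : K ⊆ ball (0 : Euc n) r) :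
    ∃ χ : Euc n → ℝ, ContDiff ℝ (⊤ : ℕ∞) χ ∧ HasCompactSupport χ ∧
      tsupport χ ⊆ ball (0 : Euc n) r ∧
      ∃ V : Set (Euc n), IsOpen V ∧ K ⊆ V ∧ Set.EqOn χ 1 V := by
  obtain ⟨ρ, ⟨hρ0, hρr⟩, hKρ⟩ := exists_pos_lt_subset_ball hr0 hK hKs
  have hmid : ρ < (ρ + r) / 2 := by linarith
  set c : ContDiffBump (0 : Euc n) := ⟨ρ, (ρ + r) / 2, hρ0, hmid⟩ with hc
  refine ⟨c, c.contDiff, c.hasCompactSupport, ?_, ball (0 : Euc n) ρ, isOpen_ball, hKρ, ?_⟩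
  · rw [c.tsupport_eq]
    exact closedBall_subset_ball (by simp [hc]; linarith)
  · intro y hy
    exact c.one_of_mem_closedBall (ball_subset_closedBall hy)

lemma glue_contDiff {f χ : Euc n → ℝ} {s : Set (Euc n)} (hs : IsOpen s)
    (hf : ContDiffOn ℝ (⊤ : ℕ∞) f s) (hχ : ContDiff ℝ (⊤ : ℕ∞) χ)
    (hχs : tsupport χ ⊆ s) : ContDiff ℝ (⊤ : ℕ∞) (fun x => χ x * f x) := by
  rw [contDiff_iff_contDiffAt]
  intro x
  by_cases hx : x ∈ s
  · exact (hχ.contDiffAt).mul (hf.contDiffAt (hs.mem_nhds hx))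
  · have hx' : x ∉ tsupport χ := fun h => hx (hχs h)
    have hev : (fun y => χ y * f y) =ᶠ[nhds x] (fun _ => (0:ℝ)) := by
      filter_upwards [(isClosed_tsupport χ).isOpen_compl.mem_nhds hx'] with y hy
      simp [image_eq_zero_of_notMem_tsupport hy]
    exact ContDiffAt.congr_of_eventuallyEq contDiffAt_const hev

lemma glue_cont {g φ : Euc n → ℝ} {s : Set (Euc n)} (hs : IsOpen s)
    (hg : ContinuousOn g s) (hφ : Continuous φ)
    (hφs : tsupport φ ⊆ s) : Continuous (fun x => g x * φ x) := by
  rw [continuous_iff_continuousAt]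
  intro x
  by_cases hx : x ∈ s
  · exact ((hg.continuousAt (hs.mem_nhds hx)).mul hφ.continuousAt)
  · have hx' : x ∉ tsupport φ := fun h => hx (hφs h)
    have hev : (fun y => g y * φ y) =ᶠ[nhds x] (fun _ => (0:ℝ)) := by
      filter_upwards [(isClosed_tsupport φ).isOpen_compl.mem_nhds hx'] with y hy
      simp [image_eq_zero_of_notMem_tsupport hy]
    exact ContinuousAt.congr continuousAt_const hev.symm

lemma integ_helper {g φ : Euc n → ℝ} (hg : ContinuousOn g (ball (0 : Euc n) r))
    (hφ : Continuous φ) (hφc : HasCompactSupport φ)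
    (hφs : tsupport φ ⊆ ball (0 : Euc n) r) :
    Integrable (fun x => g x * φ x) (volume.restrict (ball (0 : Euc n) r)) := by
  have hc : Continuous (fun x => g x * φ x) := glue_cont isOpen_ball hg hφ hφs
  have hcs : HasCompactSupport (fun x => g x * φ x) := by
    apply HasCompactSupport.intro hφc
    intro x hx
    simp [image_eq_zero_of_notMem_tsupport hx]
  exact (hc.integrable_of_hasCompactSupport hcs).restrict

lemma ibp (hr0 : 0 < r) {g φ : Euc n → ℝ} (hg : ContDiffOn ℝ (⊤ : ℕ∞) g (ball (0 : Euc n) r))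
    (hφ : ContDiff ℝ (⊤ : ℕ∞) φ) (hφc : HasCompactSupport φ)
    (hφs : tsupport φ ⊆ ball (0 : Euc n) r) (p : Fin n) :
    ∫ x in ball (0 : Euc n) r, pd g p x * φ x
      = - ∫ x in ball (0 : Euc n) r, g x * pd φ p x := by
  obtain ⟨χ, hχsm, hχc, hχs, V, hVopen, hKV, hχ1⟩ :=
    cutoff_exists hr0 (isClosed_tsupport φ) hφs
  set g' := fun x => χ x * g x with hg'
  have hg'sm : ContDiff ℝ (⊤ : ℕ∞) g' := glue_contDiff isOpen_ball hg hχsm hχs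
  have hgV : Set.EqOn g' g V := fun y hy => by simp [hg', hχ1 hy]
  have hfdV : ∀ x ∈ V, pd g' p x = pd g p x := by
    intro x hx
    have hev : g' =ᶠ[nhds x] g :=
      Filter.eventuallyEq_of_mem (hVopen.mem_nhds hx) hgV
    show fderiv ℝ g' x _ = fderiv ℝ g x _
    rw [hev.fderiv_eq]
  have e1 : (fun x => pd g p x * φ x) = fun x => pd g' p x * φ x := by
    funext x
    by_cases hx : x ∈ V
    · rw [hfdV x hx]
    · simp [image_eq_zero_of_notMem_tsupport (fun h => hx (hKV h))]
  have e2 : (fun x => g x * pd φ p x) = fun x => g' x * pd φ p x := by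
    funext x
    by_cases hx : x ∈ V
    · rw [hgV hx]
    · have : x ∉ tsupport (pd φ p) := fun h => hx (hKV (tsupport_pd_subset p h))
      simp [image_eq_zero_of_notMem_tsupport this]
  have z1 : ∀ x ∉ ball (0 : Euc n) r, pd g' p x * φ x = 0 := by
    intro x hx
    simp [image_eq_zero_of_notMem_tsupport (fun h => hx (hφs h))]
  have z2 : ∀ x ∉ ball (0 : Euc n) r, g' x * pd φ p x = 0 := by
    intro x hx
    have : x ∉ tsupport (pd φ p) := fun h => hx (hφs (tsupport_pd_subset p h))
    simp [image_eq_zero_of_notMem_tsupport this]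
  rw [e1, e2, setIntegral_eq_integral_of_forall_compl_eq_zero z1,
    setIntegral_eq_integral_of_forall_compl_eq_zero z2]
  have key : ∫ x, g' x * (fderiv ℝ φ x) (EuclideanSpace.single p 1)
      = - ∫ x, (fderiv ℝ g' x) (EuclideanSpace.single p 1) * φ x := by
    apply integral_mul_fderiv_eq_neg_fderiv_mul_of_integrable
    · have hc : Continuous (fun x => pd g' p x * φ x) :=
        ((pd_contDiff hg'sm p).continuous).mul hφ.continuous
      have hcs : HasCompactSupport (fun x => pd g' p x * φ x) := by
        apply HasCompactSupport.intro hφc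
        intro x hx
        simp [image_eq_zero_of_notMem_tsupport hx]
      exact hc.integrable_of_hasCompactSupport hcs
    · have hc : Continuous (fun x => g' x * pd φ p x) :=
        (hg'sm.continuous).mul (pd_contDiff hφ p).continuous
      have hcs : HasCompactSupport (fun x => g' x * pd φ p x) := by
        apply HasCompactSupport.intro (hcs_pd hφc p)
        intro x hx
        simp [image_eq_zero_of_notMem_tsupport hx]
      exact hc.integrable_of_hasCompactSupport hcs
    · have hc : Continuous (fun x => g' x * φ x) := (hg'sm.continuous).mul hφ.continuous
      have hcs : HasCompactSupport (fun x => g' x * φ x) := by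
        apply HasCompactSupport.intro hφc
        intro x hx
        simp [image_eq_zero_of_notMem_tsupport hx]
      exact hc.integrable_of_hasCompactSupport hcs
    · exact fun x _ => hg'sm.differentiable (by simp) x
    · exact fun x _ => hφ.differentiable (by simp) x
  show ∫ x, pd g' p x * φ x = - ∫ x, g' x * pd φ p x
  have := key
  simp only [pd]
  linarith [this]

end ibp

section split
open MeasureTheory
variable {n : ℕ}

lemma split_integral {μ : MeasureTheory.Measure (Euc n)}
    (T1 : Fin n → Fin n → Euc n → ℝ) (T2 : Fin n → Euc n → ℝ) (T3 : Euc n → ℝ)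
    (h1 : ∀ j l, Integrable (T1 j l) μ) (h2 : ∀ k, Integrable (T2 k) μ)
    (h3 : Integrable T3 μ) :
    ∫ x, ((∑ j, ∑ l, T1 j l x) + (∑ k, T2 k x) + T3 x) ∂μ
      = (∑ j, ∑ l, ∫ x, T1 j l x ∂μ) + (∑ k, ∫ x, T2 k x ∂μ) + ∫ x, T3 x ∂μ := by
  have hA : Integrable (fun x => ∑ j, ∑ l, T1 j l x) μ :=
    integrable_finset_sum _ (fun j _ => integrable_finset_sum _ (fun l _ => h1 j l))
  have hB : Integrable (fun x => ∑ k, T2 k x) μ :=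
    integrable_finset_sum _ (fun k _ => h2 k)
  have e1 : ∫ x, ((∑ j, ∑ l, T1 j l x) + (∑ k, T2 k x) + T3 x) ∂μ
      = (∫ x, ((∑ j, ∑ l, T1 j l x) + (∑ k, T2 k x)) ∂μ) + ∫ x, T3 x ∂μ :=
    integral_add (hA.add hB) h3
  have e2 : (∫ x, ((∑ j, ∑ l, T1 j l x) + (∑ k, T2 k x)) ∂μ)
      = (∫ x, (∑ j, ∑ l, T1 j l x) ∂μ) + ∫ x, (∑ k, T2 k x) ∂μ := integral_add hA hB
  rw [e1, e2, integral_finset_sum _ (fun j _ => integrable_finset_sum _ (fun l _ => h1 j l)),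
    integral_finset_sum _ (fun k _ => h2 k)]
  congr 2
  exact Finset.sum_congr rfl fun j _ => integral_finset_sum _ (fun l _ => h1 j l)

lemma test_pd {r : ℝ} {η : Euc n → ℝ} (h : IsTest r η) (q : Fin n) : IsTest r (pd η q) :=
  ⟨pd_contDiff h.1 q, hcs_pd h.2.1 q, (tsupport_pd_subset q).trans h.2.2⟩

end split

end

theorem statement3 (n : ℕ) (hn : 1 ≤ n) (r : ℝ) (hr0 : 0 < r) (hr1 : r ≤ 1)
    (U : Set (Jet n)) (F : Fin n → Fin n → Jet n → ℝ)
    (a : Fin n → Jet n → ℝ) (b : Jet n → ℝ) (u : Euc n → ℝ)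
    (hUopen : IsOpen U) (hUconv : Convex ℝ U)
    (hUsub : U ⊆ (ball (0 : Euc n) r) ×ˢ (Set.univ ×ˢ Set.univ))
    (hF : SmoothOnU U F a b)
    (hu : ContDiffOn ℝ (⊤ : ℕ∞) u (ball (0 : Euc n) r))
    (hjet : JetInU r U u) (hsol : IsWeakSolution r F a b u) :
    ∀ p : Fin n, ∀ η : Euc n → ℝ, IsTest r η →
      ∫ x in ball (0 : Euc n) r,
        ((∑ j, ∑ l,
            ((∑ i, ∑ k, beta0 F u i j k l x * pd2 (pd u p) i k x) + gammaP F u p j l x)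
              * pd2 η j l x)
          + (∑ k, pd (psiF a u k) p x * pd η k x) + pd (zetaF b u) p x * η x) = 0 := by
  intro p η hη
  obtain ⟨hηsm, hηc, hηs⟩ := hη
  have hjetsm : ContDiffOn ℝ (⊤ : ℕ∞) (jet u) (ball (0 : Euc n) r) :=
    jet_contDiffOn isOpen_ball hu
  have hGsm : ∀ j l, ContDiffOn ℝ (⊤ : ℕ∞) (fun y => F j l (jet u y)) (ball (0 : Euc n) r) :=
    fun j l => ContDiffOn.comp (hF.1 j l) hjetsm (fun x hx => hjet x hx)
  have hψsm : ∀ k, ContDiffOn ℝ (⊤ : ℕ∞) (psiF a u k) (ball (0 : Euc n) r) :=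
    fun k => ContDiffOn.comp (hF.2.1 k) hjetsm (fun x hx => hjet x hx)
  have hζsm : ContDiffOn ℝ (⊤ : ℕ∞) (zetaF b u) (ball (0 : Euc n) r) :=
    ContDiffOn.comp hF.2.2 hjetsm (fun x hx => hjet x hx)
  have hη2 : ∀ j l : Fin n, IsTest r (pd2 η j l) := fun j l => test_pd (test_pd ⟨hηsm, hηc, hηs⟩ l) j
  have hη' : IsTest r (pd η p) := test_pd ⟨hηsm, hηc, hηs⟩ p
  have hη'2 : ∀ j l : Fin n, IsTest r (pd2 (pd η p) j l) := fun j l => test_pd (test_pd hη' l) j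
  have hη'1 : ∀ k : Fin n, IsTest r (pd (pd η p) k) := fun k => test_pd hη' k
  -- Step A: rewrite the integrand using the chain rule
  have hfac : ∀ x ∈ ball (0 : Euc n) r, ∀ j l : Fin n,
      (∑ i, ∑ k, beta0 F u i j k l x * pd2 (pd u p) i k x) + gammaP F u p j l x
        = pd (fun y => F j l (jet u y)) p x := by
    intro x hx j l
    rw [chain_rule isOpen_ball hu hx hUopen (hF.1 j l) (hjet x hx) p]
    unfold beta0 gammaP
    congr 1
    refine Finset.sum_congr rfl fun i _ => Finset.sum_congr rfl fun k _ => ?_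
    rw [third_swap isOpen_ball hu hx p i k]
  have hEq : Set.EqOn
      (fun x => (∑ j, ∑ l,
          ((∑ i, ∑ k, beta0 F u i j k l x * pd2 (pd u p) i k x) + gammaP F u p j l x)
            * pd2 η j l x)
        + (∑ k, pd (psiF a u k) p x * pd η k x) + pd (zetaF b u) p x * η x)
      (fun x => (∑ j, ∑ l, pd (fun y => F j l (jet u y)) p x * pd2 η j l x)
        + (∑ k, pd (psiF a u k) p x * pd η k x) + pd (zetaF b u) p x * η x)
      (ball (0 : Euc n) r) := by
    intro x hx
    simp only []
    congr 2
    exact Finset.sum_congr rfl fun j _ => Finset.sum_congr rfl fun l _ => by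
      rw [hfac x hx j l]
  rw [setIntegral_congr_fun measurableSet_ball hEq]
  -- integrability
  have I1 : ∀ j l : Fin n, Integrable
      (fun x => pd (fun y => F j l (jet u y)) p x * pd2 η j l x)
      (volume.restrict (ball (0 : Euc n) r)) := fun j l =>
    integ_helper (pd_contDiffOn isOpen_ball (hGsm j l) p).continuousOn
      (hη2 j l).1.continuous (hη2 j l).2.1 (hη2 j l).2.2
  have I2 : ∀ k : Fin n, Integrable (fun x => pd (psiF a u k) p x * pd η k x)
      (volume.restrict (ball (0 : Euc n) r)) := fun k =>
    integ_helper (pd_contDiffOn isOpen_ball (hψsm k) p).continuousOn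
      ((pd_contDiff hηsm k).continuous) (hcs_pd hηc k) ((tsupport_pd_subset k).trans hηs)
  have I3 : Integrable (fun x => pd (zetaF b u) p x * η x)
      (volume.restrict (ball (0 : Euc n) r)) :=
    integ_helper (pd_contDiffOn isOpen_ball hζsm p).continuousOn hηsm.continuous hηc hηs
  have I1' : ∀ j l : Fin n, Integrable (fun x => F j l (jet u x) * pd2 (pd η p) j l x)
      (volume.restrict (ball (0 : Euc n) r)) := fun j l =>
    integ_helper (hGsm j l).continuousOn (hη'2 j l).1.continuous (hη'2 j l).2.1 (hη'2 j l).2.2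
  have I2' : ∀ k : Fin n, Integrable (fun x => a k (jet u x) * pd (pd η p) k x)
      (volume.restrict (ball (0 : Euc n) r)) := fun k =>
    integ_helper (hψsm k).continuousOn (hη'1 k).1.continuous (hη'1 k).2.1 (hη'1 k).2.2
  have I3' : Integrable (fun x => b (jet u x) * pd η p x)
      (volume.restrict (ball (0 : Euc n) r)) :=
    integ_helper hζsm.continuousOn hη'.1.continuous hη'.2.1 hη'.2.2
  -- split the integral
  rw [split_integral _ _ _ I1 I2 I3]
  -- integrate by parts in each term
  have key1 : ∀ j l : Fin n,
      (∫ x in ball (0 : Euc n) r, pd (fun y => F j l (jet u y)) p x * pd2 η j l x)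
        = - ∫ x in ball (0 : Euc n) r, F j l (jet u x) * pd2 (pd η p) j l x := by
    intro j l
    rw [ibp hr0 (hGsm j l) (hη2 j l).1 (hη2 j l).2.1 (hη2 j l).2.2 p]
    congr 1
    refine setIntegral_congr_fun measurableSet_ball (fun x _ => ?_)
    rw [third_swap isOpen_univ hηsm.contDiffOn (Set.mem_univ x) p j l]
  have key2 : ∀ k : Fin n,
      (∫ x in ball (0 : Euc n) r, pd (psiF a u k) p x * pd η k x)
        = - ∫ x in ball (0 : Euc n) r, a k (jet u x) * pd (pd η p) k x := by
    intro k
    rw [ibp hr0 (hψsm k) (pd_contDiff hηsm k) (hcs_pd hηc k)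
      ((tsupport_pd_subset k).trans hηs) p]
    congr 1
    refine setIntegral_congr_fun measurableSet_ball (fun x _ => ?_)
    have hsym : pd (pd η k) p x = pd (pd η p) k x :=
      pd2_symm_at (hηsm.contDiffAt) p k
    rw [show psiF a u k x = a k (jet u x) from rfl, hsym]
  have key3 : (∫ x in ball (0 : Euc n) r, pd (zetaF b u) p x * η x)
      = - ∫ x in ball (0 : Euc n) r, b (jet u x) * pd η p x := by
    rw [ibp hr0 hζsm hηsm hηc hηs p]
    rfl
  rw [Finset.sum_congr rfl (fun j _ => Finset.sum_congr rfl (fun l _ => key1 j l)),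
    Finset.sum_congr rfl (fun k _ => key2 k), key3]
  -- use the weak solution identity for pd η p
  have hsol' := hsol (pd η p) hη'
  rw [split_integral _ _ _ I1' I2' I3'] at hsol'
  simp only [Finset.sum_neg_distrib]
  linarith [hsol']
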